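/- Let A = sI − B where B is an m×m matrix with nonnegative entries and s > ρ(B) (the spectral radius of B), so A is a nonsingular M-matrix. Then for every real p with 0 ≤ p ≤ 1 and all subsets I, J of {1,...,m}: tr(A[I]^p) + tr(A[J]^p) ≥ tr(A[I∪J]^p) + tr(A[I∩J]^p), where A^p := s^p Σ_{i≥0} C(p,i) (−s)^{−i} Bⁱ (binomial series, absolutely convergent since s > ρ(B)). -/

import Mathlib

open Matrix

/-- The principal submatrix of `B` with rows and columns in `I`. -/
def rsub {m : ℕ} (B : Matrix (Fin m) (Fin m) ℝ) (I : Finset (Fin m)) :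
    Matrix I I ℝ :=
  B.submatrix (fun i : I => (i : Fin m)) (fun i : I => (i : Fin m))

/-- Generalized binomial coefficient `C(p, i) = p (p-1) ⋯ (p-i+1) / i!`. -/
noncomputable def genBinom (p : ℝ) (i : ℕ) : ℝ :=
  (∏ k ∈ Finset.range i, (p - k)) / (Nat.factorial i)

/-- `(s·Id - B)^p`, defined by the binomial series
`s^p Σ_{i≥0} C(p,i) (-s)^{-i} Bⁱ`, absolutely convergent when `s > ρ(B)`. -/
noncomputable def mPow {n : Type*} [Fintype n] [DecidableEq n]
    (s p : ℝ) (B : Matrix n n ℝ) : Matrix n n ℝ :=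
  ∑' i : ℕ, (s ^ p * genBinom p i * ((-s) ^ i)⁻¹) • B ^ i

/-! ### Auxiliary combinatorial lemmas -/

variable {m : ℕ}

/-- `B` restricted to `K × K`, extended by zero. -/
def CB (B : Matrix (Fin m) (Fin m) ℝ) (K : Finset (Fin m)) : Matrix (Fin m) (Fin m) ℝ :=
  fun a b => if a ∈ K ∧ b ∈ K then B a b else 0

/-- Weight of the walk `a, f 0, f 1, ..., f (i-1), b`. -/
def wpF (M : Matrix (Fin m) (Fin m) ℝ) (b : Fin m) : (i : ℕ) → Fin m → (Fin i → Fin m) → ℝ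
  | 0, a, _ => M a b
  | i+1, a, f => M a (f 0) * wpF M b i (f 0) (fun j => f j.succ)

theorem pow_apply_eq_sum_wpF (M : Matrix (Fin m) (Fin m) ℝ) :
    ∀ (i : ℕ) (a b : Fin m), (M ^ (i+1)) a b = ∑ f : Fin i → Fin m, wpF M b i a f := by
  intro i
  induction i with
  | zero => intro a b; simp [wpF, pow_one]
  | succ i ih =>
    intro a b
    rw [pow_succ', Matrix.mul_apply]
    simp_rw [ih]
    rw [← (Fin.consEquiv (fun _ : Fin (i+1) => Fin m)).sum_comp (fun f => wpF M b (i+1) a f)]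
    rw [Fintype.sum_prod_type]
    refine Finset.sum_congr rfl fun c _ => ?_
    rw [Finset.mul_sum]
    refine Finset.sum_congr rfl fun f _ => ?_
    simp [wpF, Fin.consEquiv, Fin.cons_zero, Fin.cons_succ]

theorem wpF_nonneg {M : Matrix (Fin m) (Fin m) ℝ} (hM : ∀ a b, 0 ≤ M a b) :
    ∀ (i : ℕ) (a b : Fin m) (f : Fin i → Fin m), 0 ≤ wpF M b i a f := by
  intro i
  induction i with
  | zero => intro a b f; exact hM a b
  | succ i ih => intro a b f; exact mul_nonneg (hM a _) (ih _ _ _)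

theorem wpF_CB (B : Matrix (Fin m) (Fin m) ℝ) (K : Finset (Fin m)) :
    ∀ (i : ℕ) (a b : Fin m) (f : Fin i → Fin m),
      wpF (CB B K) b i a f =
        if a ∈ K ∧ b ∈ K ∧ ∀ j, f j ∈ K then wpF B b i a f else 0 := by
  intro i
  induction i with
  | zero =>
    intro a b f
    simp only [wpF, CB]
    congr 1
    simp
  | succ i ih =>
    intro a b f
    simp only [wpF, ih, CB, Fin.forall_fin_succ]
    split_ifs <;> first | (exfalso; tauto) | ring

theorem rsub_pow_apply (B : Matrix (Fin m) (Fin m) ℝ) (K : Finset (Fin m)) :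
    ∀ (i : ℕ) (a b : K), ((rsub B K) ^ i) a b = ((CB B K) ^ i) (a : Fin m) (b : Fin m) := by
  intro i
  induction i with
  | zero =>
    intro a b
    simp only [pow_zero, Matrix.one_apply]
    simp [Subtype.coe_inj]
  | succ i ih =>
    intro a b
    rw [pow_succ, pow_succ, Matrix.mul_apply, Matrix.mul_apply]
    have h0 : ∀ c : Fin m, c ∉ K → ((CB B K) ^ i) (a : Fin m) c * CB B K c (b : Fin m) = 0 := by
      intro c hc
      have : CB B K c (b : Fin m) = 0 := by simp [CB, hc]
      rw [this, mul_zero]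
    rw [← Finset.sum_subset (Finset.subset_univ K) (fun c _ hc => h0 c hc)]
    rw [← Finset.sum_coe_sort K]
    refine Finset.sum_congr rfl fun c _ => ?_
    rw [ih a c]
    congr 1
    simp [rsub, CB, Matrix.submatrix_apply, c.2, b.2]

theorem trace_rsub_pow_eq (B : Matrix (Fin m) (Fin m) ℝ) (K : Finset (Fin m)) (i : ℕ) :
    Matrix.trace ((rsub B K) ^ (i+1)) = Matrix.trace ((CB B K) ^ (i+1)) := by
  rw [Matrix.trace, Matrix.trace]
  simp only [Matrix.diag]
  calc ∑ a : K, ((rsub B K) ^ (i+1)) a a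
      = ∑ a : K, ((CB B K) ^ (i+1)) (a : Fin m) (a : Fin m) :=
        Finset.sum_congr rfl fun a _ => rsub_pow_apply B K (i+1) a a
    _ = ∑ a ∈ K, ((CB B K) ^ (i+1)) a a := Finset.sum_coe_sort K (fun a => ((CB B K) ^ (i+1)) a a)
    _ = ∑ a : Fin m, ((CB B K) ^ (i+1)) a a := by
        refine Finset.sum_subset (Finset.subset_univ K) ?_
        intro a _ ha
        rw [pow_succ, Matrix.mul_apply]
        apply Finset.sum_eq_zero
        intro c _
        have : CB B K c a = 0 := by simp [CB, ha]
        rw [this, mul_zero]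

theorem ite_ineq {P Q R S : Prop} [Decidable P] [Decidable Q] [Decidable R] [Decidable S]
    {w : ℝ} (hw : 0 ≤ w) (hR : P → R) (hR' : Q → R) (hS : S ↔ P ∧ Q) :
    (if P then w else 0) + (if Q then w else 0) ≤ (if R then w else 0) + (if S then w else 0) := by
  split_ifs <;> first | (exfalso; tauto) | linarith

theorem trace_CB_pow_supermodular {B : Matrix (Fin m) (Fin m) ℝ}
    (hB : ∀ a b, 0 ≤ B a b) (i : ℕ) (I J : Finset (Fin m)) :
    Matrix.trace ((CB B I) ^ (i+1)) + Matrix.trace ((CB B J) ^ (i+1)) ≤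
      Matrix.trace ((CB B (I ∪ J)) ^ (i+1)) + Matrix.trace ((CB B (I ∩ J)) ^ (i+1)) := by
  have key : ∀ K : Finset (Fin m), Matrix.trace ((CB B K) ^ (i+1)) =
      ∑ a : Fin m, ∑ f : Fin i → Fin m,
        (if a ∈ K ∧ a ∈ K ∧ ∀ j, f j ∈ K then wpF B a i a f else 0) := by
    intro K
    rw [Matrix.trace]
    refine Finset.sum_congr rfl fun a _ => ?_
    rw [Matrix.diag, pow_apply_eq_sum_wpF]
    exact Finset.sum_congr rfl fun f _ => wpF_CB B K i a a f
  rw [key, key, key, key]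
  rw [← Finset.sum_add_distrib, ← Finset.sum_add_distrib]
  refine Finset.sum_le_sum fun a _ => ?_
  rw [← Finset.sum_add_distrib, ← Finset.sum_add_distrib]
  refine Finset.sum_le_sum fun f _ => ?_
  refine ite_ineq (wpF_nonneg hB i a a f) ?_ ?_ ?_
  · rintro ⟨h1, h2, h3⟩
    exact ⟨Finset.mem_union_left _ h1, Finset.mem_union_left _ h1,
      fun j => Finset.mem_union_left _ (h3 j)⟩
  · rintro ⟨h1, h2, h3⟩
    exact ⟨Finset.mem_union_right _ h1, Finset.mem_union_right _ h1,
      fun j => Finset.mem_union_right _ (h3 j)⟩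
  · simp only [Finset.mem_inter, forall_and]
    tauto

theorem CB_pow_nonneg {B : Matrix (Fin m) (Fin m) ℝ} (hB : ∀ a b, 0 ≤ B a b)
    (K : Finset (Fin m)) (i : ℕ) (a b : Fin m) : 0 ≤ ((CB B K) ^ i) a b := by
  have hCB : ∀ a b, 0 ≤ CB B K a b := by
    intro a b; unfold CB; split_ifs; exacts [hB a b, le_refl 0]
  cases i with
  | zero =>
    rw [pow_zero, Matrix.one_apply]
    split_ifs <;> norm_num
  | succ i =>
    rw [pow_apply_eq_sum_wpF]
    exact Finset.sum_nonneg fun f _ => wpF_nonneg hCB i a b f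

theorem CB_pow_le {B : Matrix (Fin m) (Fin m) ℝ} (hB : ∀ a b, 0 ≤ B a b)
    (K : Finset (Fin m)) (i : ℕ) (a b : Fin m) : ((CB B K) ^ i) a b ≤ (B ^ i) a b := by
  cases i with
  | zero => simp only [pow_zero]; exact le_refl _
  | succ i =>
    rw [pow_apply_eq_sum_wpF, pow_apply_eq_sum_wpF]
    refine Finset.sum_le_sum fun f _ => ?_
    rw [wpF_CB]
    split_ifs
    · exact le_refl _
    · exact wpF_nonneg hB i a b f

theorem CB_univ {B : Matrix (Fin m) (Fin m) ℝ} : CB B Finset.univ = B := by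
  funext a b; simp [CB]

theorem pow_entry_nonneg {B : Matrix (Fin m) (Fin m) ℝ} (hB : ∀ a b, 0 ≤ B a b)
    (i : ℕ) (a b : Fin m) : 0 ≤ (B ^ i) a b := by
  have := CB_pow_nonneg hB Finset.univ i a b
  rwa [CB_univ] at this

/-! ### Binomial coefficient estimates -/

theorem abs_prod_le {p : ℝ} (hp0 : 0 ≤ p) (hp1 : p ≤ 1) :
    ∀ i : ℕ, |∏ k ∈ Finset.range i, (p - k)| ≤ (Nat.factorial i : ℝ) := by
  intro i
  induction i with
  | zero => simp
  | succ i ih =>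
    rw [Finset.prod_range_succ, abs_mul]
    have h1 : |p - (i : ℝ)| ≤ (i : ℝ) + 1 := by
      rw [abs_le]
      constructor <;> nlinarith [Nat.cast_nonneg (α := ℝ) i]
    calc |∏ k ∈ Finset.range i, (p - k)| * |p - (i:ℝ)|
        ≤ (Nat.factorial i : ℝ) * ((i:ℝ) + 1) := by
          apply mul_le_mul ih h1 (abs_nonneg _) (Nat.cast_nonneg _)
      _ = (Nat.factorial (i+1) : ℝ) := by
          rw [Nat.factorial_succ]; push_cast; ring

theorem abs_genBinom_le_one {p : ℝ} (hp0 : 0 ≤ p) (hp1 : p ≤ 1) (i : ℕ) :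
    |genBinom p i| ≤ 1 := by
  rw [genBinom, abs_div, abs_of_pos (show (0:ℝ) < (Nat.factorial i : ℝ) by positivity)]
  rw [div_le_one (by positivity)]
  exact abs_prod_le hp0 hp1 i

theorem genBinom_alt_sign {p : ℝ} (hp0 : 0 ≤ p) (hp1 : p ≤ 1) :
    ∀ i : ℕ, 1 ≤ i → (-1:ℝ)^i * ∏ k ∈ Finset.range i, (p - k) ≤ 0 := by
  intro i hi
  induction i, hi using Nat.le_induction with
  | base => simp; linarith
  | succ i hi ih =>
    rw [Finset.prod_range_succ, pow_succ]
    have h1 : 0 ≤ (i:ℝ) - p := by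
      have : (1:ℝ) ≤ i := by exact_mod_cast hi
      linarith
    nlinarith

/-- The coefficients of the binomial series. -/
noncomputable def mc (s p : ℝ) (i : ℕ) : ℝ := s ^ p * genBinom p i * ((-s) ^ i)⁻¹

theorem neg_one_pow_inv (i : ℕ) : (((-1:ℝ)^i))⁻¹ = (-1:ℝ)^i := by
  rcases Nat.even_or_odd i with h | h
  · rw [h.neg_one_pow]; norm_num
  · rw [h.neg_one_pow]; norm_num

theorem mc_nonpos {s p : ℝ} (hs0 : 0 < s) (hp0 : 0 ≤ p) (hp1 : p ≤ 1)
    (i : ℕ) (hi : 1 ≤ i) : mc s p i ≤ 0 := by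
  have h2 := genBinom_alt_sign hp0 hp1 i hi
  have h3 : 0 < s ^ p * (s^i)⁻¹ / (Nat.factorial i : ℝ) := by
    have := Real.rpow_pos_of_pos hs0 p
    positivity
  have heq : mc s p i =
      (s ^ p * (s^i)⁻¹ / (Nat.factorial i : ℝ)) * ((-1:ℝ)^i * ∏ k ∈ Finset.range i, (p - k)) := by
    rw [mc, genBinom, neg_pow, mul_inv, neg_one_pow_inv]
    ring
  rw [heq]
  exact mul_nonpos_of_nonneg_of_nonpos h3.le h2

theorem abs_mc_le {s p : ℝ} (hs0 : 0 < s) (hp0 : 0 ≤ p) (hp1 : p ≤ 1) (i : ℕ) :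
    |mc s p i| ≤ s ^ p * (s⁻¹)^i := by
  have hsp := Real.rpow_pos_of_pos hs0 p
  rw [mc, abs_mul, abs_mul, abs_of_pos hsp, abs_inv, abs_pow, abs_neg,
    abs_of_pos hs0, ← inv_pow]
  calc s ^ p * |genBinom p i| * (s⁻¹)^i ≤ s ^ p * 1 * (s⁻¹)^i := by
        apply mul_le_mul_of_nonneg_right _ (by positivity)
        exact mul_le_mul_of_nonneg_left (abs_genBinom_le_one hp0 hp1 i) hsp.le
    _ = s ^ p * (s⁻¹)^i := by ring

/-! ### The Gelfand estimate -/

section gelfand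
attribute [local instance] Matrix.linftyOpNormedRing Matrix.linftyOpNormedAlgebra

open Filter

theorem exists_geom_bound (B : Matrix (Fin m) (Fin m) ℝ)
    (hBnn : ∀ i a b, 0 ≤ (B ^ i) a b) {s : ℝ}
    (hs : spectralRadius ℂ (B.map Complex.ofReal) < ENNReal.ofReal s) :
    ∃ r : ℝ, 0 < r ∧ r < s ∧ ∀ᶠ i in atTop, ∀ a b, (B ^ i) a b ≤ r ^ i := by
  set Bc := B.map Complex.ofReal with hBc
  set ρ := spectralRadius ℂ Bc with hρ
  have hs0 : 0 < s := ENNReal.ofReal_pos.mp ((show (0:ENNReal) ≤ ρ from zero_le).trans_lt hs)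
  have hρtop : ρ ≠ ⊤ := (hs.trans_le le_top).ne
  have hρs : ρ.toReal < s := by
    rwa [ENNReal.lt_ofReal_iff_toReal_lt hρtop] at hs
  set r : ℝ := (ρ.toReal + s) / 2 with hr
  have hr0 : 0 < r := by
    have := ENNReal.toReal_nonneg (a := ρ); positivity
  have hrs : r < s := by rw [hr]; linarith
  have hρr : ρ < ENNReal.ofReal r := by
    rw [ENNReal.lt_ofReal_iff_toReal_lt hρtop, hr]; linarith
  refine ⟨r, hr0, hrs, ?_⟩
  have htd := spectrum.pow_nnnorm_pow_one_div_tendsto_nhds_spectralRadius Bc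
  have hev : ∀ᶠ n : ℕ in atTop, (‖Bc ^ n‖₊ : ENNReal) ^ (1/(n:ℝ)) < ENNReal.ofReal r :=
    htd.eventually_lt_const hρr
  filter_upwards [hev, eventually_ge_atTop 1] with n hn hn1 a b
  have hne : (n:ℝ) ≠ 0 := by positivity
  have h1 : (‖Bc ^ n‖₊ : ENNReal) ≤ (ENNReal.ofReal r) ^ (n:ℝ) := by
    have := ENNReal.rpow_le_rpow hn.le (show (0:ℝ) ≤ (n:ℝ) by positivity)
    rwa [← ENNReal.rpow_mul, one_div_mul_cancel hne, ENNReal.rpow_one] at this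
  have h2 : ‖Bc ^ n‖ ≤ r ^ n := by
    have h3 : (‖Bc ^ n‖₊ : ENNReal) ≤ ENNReal.ofReal (r ^ n) := by
      rwa [ENNReal.rpow_natCast, ← ENNReal.ofReal_pow hr0.le] at h1
    have h4 := (ENNReal.le_ofReal_iff_toReal_le ENNReal.coe_ne_top (by positivity)).mp h3
    simpa using h4
  have h5 : (Bc ^ n) a b = Complex.ofReal ((B ^ n) a b) := by
    have : Bc ^ n = (B ^ n).map Complex.ofReal := by
      rw [hBc]
      have : B.map Complex.ofReal = Complex.ofRealHom.mapMatrix B := rfl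
      rw [this, ← map_pow]
      rfl
    rw [this, Matrix.map_apply]
  have h6 : ‖(Bc ^ n) a b‖₊ ≤ ‖Bc ^ n‖₊ := by
    rw [Matrix.linfty_opNNNorm_def]
    calc ‖(Bc ^ n) a b‖₊ ≤ ∑ j, ‖(Bc ^ n) a j‖₊ :=
          Finset.single_le_sum (f := fun j => ‖(Bc ^ n) a j‖₊)
            (fun j _ => zero_le) (Finset.mem_univ b)
      _ ≤ _ := Finset.le_sup (f := fun i => ∑ j, ‖(Bc ^ n) i j‖₊) (Finset.mem_univ a)
  have h7 : ‖(Bc ^ n) a b‖ ≤ ‖Bc ^ n‖ := h6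
  rw [h5] at h7
  rw [Complex.norm_real, Real.norm_eq_abs, abs_of_nonneg (hBnn n a b)] at h7
  exact h7.trans h2

end gelfand

/-! ### Summability and the trace of `mPow` -/

theorem trace_mPow_eq {B : Matrix (Fin m) (Fin m) ℝ} (hB : ∀ a b, 0 ≤ B a b)
    {s p r : ℝ} (hs0 : 0 < s) (hp0 : 0 ≤ p) (hp1 : p ≤ 1)
    (hr0 : 0 < r) (hrs : r < s)
    (hbd : ∀ᶠ i in Filter.atTop, ∀ a b, (B ^ i) a b ≤ r ^ i)
    (K : Finset (Fin m)) :
    Summable (fun i => mc s p i * Matrix.trace ((rsub B K) ^ i)) ∧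
    Matrix.trace (mPow s p (rsub B K)) =
      ∑' i : ℕ, mc s p i * Matrix.trace ((rsub B K) ^ i) := by
  set M := rsub B K with hM
  -- the geometric majorant
  have hgeom : Summable (fun i : ℕ => s ^ p * (r/s)^i) := by
    refine (summable_geometric_of_lt_one (by positivity) ?_).mul_left _
    rw [div_lt_one hs0]; exact hrs
  -- entrywise summability
  have hentry : ∀ a b : K, Summable (fun i : ℕ => mc s p i * (M ^ i) a b) := by
    intro a b
    refine Summable.of_norm_bounded_eventually_nat hgeom ?_
    filter_upwards [hbd] with i hi
    have hMnn : 0 ≤ (M ^ i) a b := by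
      rw [hM, rsub_pow_apply]; exact CB_pow_nonneg hB K i _ _
    have hMle : (M ^ i) a b ≤ r ^ i := by
      rw [hM, rsub_pow_apply]
      exact (CB_pow_le hB K i _ _).trans (hi _ _)
    rw [Real.norm_eq_abs, abs_mul, abs_of_nonneg hMnn]
    calc |mc s p i| * (M ^ i) a b ≤ (s ^ p * (s⁻¹)^i) * r ^ i := by
          apply mul_le_mul (abs_mc_le hs0 hp0 hp1 i) hMle hMnn
          positivity
      _ = s ^ p * (r/s)^i := by
          rw [div_pow]
          field_simp
          rw [← mul_pow, one_div_mul_cancel hs0.ne', one_pow]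
  -- the matrix series has an entrywise sum
  set S : Matrix K K ℝ := Matrix.of (fun a b => ∑' i : ℕ, mc s p i * (M ^ i) a b) with hS
  have hHasSum : HasSum (fun i : ℕ => mc s p i • M ^ i) S := by
    refine Pi.hasSum.mpr ?_
    intro a
    refine Pi.hasSum.mpr ?_
    intro b
    exact (hentry a b).hasSum
  have hmPow : mPow s p M = S := hHasSum.tsum_eq
  constructor
  · have : (fun i => mc s p i * Matrix.trace (M ^ i)) =
        fun i => ∑ a : K, mc s p i * (M ^ i) a a := by
      funext i
      rw [Matrix.trace, Finset.mul_sum]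
      rfl
    rw [this]
    exact summable_sum (fun a _ => hentry a a)
  · rw [hmPow, Matrix.trace]
    have : ∀ a : K, S.diag a = ∑' i : ℕ, mc s p i * (M ^ i) a a := fun a => rfl
    calc ∑ a : K, S.diag a = ∑ a : K, ∑' i : ℕ, mc s p i * (M ^ i) a a :=
          Finset.sum_congr rfl fun a _ => this a
      _ = ∑' i : ℕ, ∑ a : K, mc s p i * (M ^ i) a a :=
          (Summable.tsum_finsetSum (fun a _ => hentry a a)).symm
      _ = ∑' i : ℕ, mc s p i * Matrix.trace (M ^ i) := by
          refine tsum_congr fun i => ?_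
          rw [Matrix.trace, Finset.mul_sum]
          rfl

/-! ### Main theorem -/

/-- For a nonsingular M-matrix `A = s·Id − B` (with `B ≥ 0` entrywise and
`s > ρ(B)`) and `0 ≤ p ≤ 1`, the set function `I ↦ tr (A[I]^p)` is submodular,
where `A[I]^p = (s·Id − B[I])^p` is given by the binomial series. -/
theorem trace_mmatrix_rpow_submodular {m : ℕ} (B : Matrix (Fin m) (Fin m) ℝ)
    (hB : ∀ i j, 0 ≤ B i j) (s : ℝ)
    (hs : spectralRadius ℂ (B.map (Complex.ofReal)) < ENNReal.ofReal s)
    (p : ℝ) (hp0 : 0 ≤ p) (hp1 : p ≤ 1) (I J : Finset (Fin m)) :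
    Matrix.trace (mPow s p (rsub B (I ∪ J))) + Matrix.trace (mPow s p (rsub B (I ∩ J))) ≤
      Matrix.trace (mPow s p (rsub B I)) + Matrix.trace (mPow s p (rsub B J)) := by
  have hs0 : 0 < s := ENNReal.ofReal_pos.mp ((zero_le).trans_lt hs)
  obtain ⟨r, hr0, hrs, hbd⟩ := exists_geom_bound B (pow_entry_nonneg hB) hs
  have hU := trace_mPow_eq hB hs0 hp0 hp1 hr0 hrs hbd (I ∪ J)
  have hN := trace_mPow_eq hB hs0 hp0 hp1 hr0 hrs hbd (I ∩ J)
  have hI := trace_mPow_eq hB hs0 hp0 hp1 hr0 hrs hbd I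
  have hJ := trace_mPow_eq hB hs0 hp0 hp1 hr0 hrs hbd J
  rw [hU.2, hN.2, hI.2, hJ.2]
  rw [← Summable.tsum_add hU.1 hN.1, ← Summable.tsum_add hI.1 hJ.1]
  refine Summable.tsum_le_tsum ?_ (hU.1.add hN.1) (hI.1.add hJ.1)
  intro i
  cases i with
  | zero =>
    simp only [pow_zero, Matrix.trace_one, Fintype.card_coe]
    have hcard : ((I ∪ J).card : ℝ) + ((I ∩ J).card : ℝ) = (I.card : ℝ) + (J.card : ℝ) := by
      have := Finset.card_union_add_card_inter I J
      exact_mod_cast congrArg (Nat.cast (R := ℝ)) this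
    have h := congrArg (fun x => mc s p 0 * x) hcard
    simp only [mul_add] at h
    linarith [h]
  | succ i =>
    have hc := mc_nonpos hs0 hp0 hp1 (i+1) (Nat.le_add_left 1 i)
    have htr : Matrix.trace ((rsub B I) ^ (i+1)) + Matrix.trace ((rsub B J) ^ (i+1)) ≤
        Matrix.trace ((rsub B (I ∪ J)) ^ (i+1)) + Matrix.trace ((rsub B (I ∩ J)) ^ (i+1)) := by
      rw [trace_rsub_pow_eq, trace_rsub_pow_eq, trace_rsub_pow_eq, trace_rsub_pow_eq]
      exact trace_CB_pow_supermodular hB i I J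
    have h := mul_le_mul_of_nonpos_left htr hc
    simp only [mul_add] at h
    linarith [h]
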